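/- Let A > 0, let v denote one of the coordinate directions x₁, x₂, u₋, let d : ℝ⁴ → ℝ be three times continuously differentiable and T, S : ℝ⁴ → ℝ continuous. Assume that d, ∂_{u₊}d, ∂_v d and ∂_{u₊}∂_v d all vanish at every point of B_ε with u₊ = 0, that |∂²_{u₊u₊}d(x)| ≤ A·(|T(x)| + |∂_{u₊}d(x)| + |d(x)|) on B_ε, and that |∂²_{u₊u₊}(∂_v d)(x)| ≤ A·(|S(x)| + |T(x)| + |∂_{u₊}∂_v d(x)| + |∂_v d(x)| + |∂_{u₊}d(x)| + |d(x)|) on B_ε. Then there exist λ₀ > 0 and C > 0, depending only on ε, μ, M, A, such that for all λ ≥ λ₀ one has ‖∂_v d‖_λ + ‖∂_{u₊}∂_v d‖_λ ≤ (C/√λ) · (‖S‖_λ + ‖T‖_λ). -/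

import Mathlib

set_option maxHeartbeats 1000000


open MeasureTheory

/-- Partial derivative of a function on ℝ⁴ in the `i`-th coordinate direction. -/
noncomputable def pd (i : Fin 4) (φ : (Fin 4 → ℝ) → ℝ) (x : Fin 4 → ℝ) : ℝ :=
  fderiv ℝ φ x (Pi.single i 1)

/-- The region `B_ε = {u₊² + u₋² + x₁² + x₂² ≤ ε²⁰, u₊ ≥ 0, u₋ ≥ 0}`, with
coordinates `x = (u₊, x₁, x₂, u₋)` indexed by `0,1,2,3`. -/
def IKregion (ε : ℝ) : Set (Fin 4 → ℝ) :=
  {x | (x 0)^2 + (x 3)^2 + (x 1)^2 + (x 2)^2 ≤ ε^20 ∧ 0 ≤ x 0 ∧ 0 ≤ x 3}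

/-- The Ionescu–Klainerman Carleman weight. -/
noncomputable def IKweight (ε : ℝ) (x : Fin 4 → ℝ) : ℝ :=
  Real.log (ε⁻¹ * (x 0 + ε) * (x 3 + ε) + ε^10 * ((x 0)^2 + (x 3)^2 + (x 1)^2 + (x 2)^2))

/-- The weighted norm `‖φ‖_λ = (∫_{B_ε} φ² e^(−2λ f_ε) ω dx)^(1/2)`. -/
noncomputable def IKnorm (ε : ℝ) (ω : (Fin 4 → ℝ) → ℝ) (lam : ℝ)
    (φ : (Fin 4 → ℝ) → ℝ) : ℝ :=
  Real.sqrt (∫ x in IKregion ε, (φ x)^2 * Real.exp (-(2*lam) * IKweight ε x) * ω x)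

lemma contDiff_pd {n : ℕ} {φ : (Fin 4 → ℝ) → ℝ} (h : ContDiff ℝ (n + 1 : ℕ) φ) (i : Fin 4) :
    ContDiff ℝ n (pd i φ) := by
  have h' : ContDiff ℝ ((n : WithTop ℕ∞) + 1) φ := by exact_mod_cast h
  have := (contDiff_succ_iff_fderiv.mp h').2.2
  exact this.clm_apply contDiff_const

lemma continuous_pd {n : ℕ} {φ : (Fin 4 → ℝ) → ℝ} (h : ContDiff ℝ (n + 1 : ℕ) φ) (i : Fin 4) :
    Continuous (pd i φ) := (contDiff_pd h i).continuous

lemma hasDerivAt_upd (x : Fin 4 → ℝ) (s : ℝ) :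
    HasDerivAt (fun t => Function.update x (0 : Fin 4) t) (Pi.single (0 : Fin 4) (1:ℝ)) s := by
  rw [hasDerivAt_pi]
  intro i
  by_cases h : i = 0
  · subst h
    simpa [Function.update] using (hasDerivAt_id' s)
  · simp only [Function.update, dif_neg h]
    simpa [Pi.single, Function.update, h] using (hasDerivAt_const s (x i))

lemma hasDerivAt_comp_upd {φ : (Fin 4 → ℝ) → ℝ} (hφ : Differentiable ℝ φ)
    (x : Fin 4 → ℝ) (s : ℝ) :
    HasDerivAt (fun t => φ (Function.update x 0 t)) (pd 0 φ (Function.update x 0 s)) s :=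
  ((hφ _).hasFDerivAt.comp_hasDerivAt s (hasDerivAt_upd x s))


section region

noncomputable def IKarg (ε : ℝ) (x : Fin 4 → ℝ) : ℝ :=
  ε⁻¹ * (x 0 + ε) * (x 3 + ε) + ε^10 * ((x 0)^2 + (x 3)^2 + (x 1)^2 + (x 2)^2)

lemma upd0 (x : Fin 4 → ℝ) (t : ℝ) : Function.update x 0 t 0 = t := Function.update_self _ _ _
lemma upd1 (x : Fin 4 → ℝ) (t : ℝ) : Function.update x 0 t 1 = x 1 :=
  Function.update_of_ne (by decide) _ _
lemma upd2 (x : Fin 4 → ℝ) (t : ℝ) : Function.update x 0 t 2 = x 2 :=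
  Function.update_of_ne (by decide) _ _
lemma upd3 (x : Fin 4 → ℝ) (t : ℝ) : Function.update x 0 t 3 = x 3 :=
  Function.update_of_ne (by decide) _ _

lemma IKweight_eq_log (ε : ℝ) (x : Fin 4 → ℝ) : IKweight ε x = Real.log (IKarg ε x) := rfl

lemma eps10_le {ε : ℝ} (hε : 0 < ε) (hε2 : ε ≤ 1/2) : ε^10 ≤ ε := by
  have := pow_le_pow_of_le_one hε.le (by linarith : ε ≤ 1) (by norm_num : 1 ≤ 10)
  simpa using this

lemma eps20_le {ε : ℝ} (hε : 0 < ε) (hε2 : ε ≤ 1/2) : ε^20 ≤ ε^2 := by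
  have h := eps10_le hε hε2
  calc ε^20 = (ε^10)^2 := by ring
  _ ≤ ε^2 := by nlinarith [pow_nonneg hε.le 10]

lemma upd_mem {ε : ℝ} {x : Fin 4 → ℝ} (hx : x ∈ IKregion ε) {t : ℝ} (ht : 0 ≤ t)
    (ht' : t ≤ x 0) : Function.update x 0 t ∈ IKregion ε := by
  obtain ⟨h1, h2, h3⟩ := hx
  refine ⟨?_, ?_, ?_⟩ <;> simp only [upd0, upd1, upd2, upd3]
  · nlinarith
  · exact ht
  · exact h3

lemma x0_le {ε : ℝ} (hε : 0 < ε) {x : Fin 4 → ℝ} (hx : x ∈ IKregion ε) : x 0 ≤ ε^10 := by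
  obtain ⟨h1, h2, h3⟩ := hx
  nlinarith [sq_nonneg (x 1), sq_nonneg (x 2), sq_nonneg (x 3), pow_nonneg hε.le 10]

lemma x3_le {ε : ℝ} (hε : 0 < ε) {x : Fin 4 → ℝ} (hx : x ∈ IKregion ε) : x 3 ≤ ε^10 := by
  obtain ⟨h1, h2, h3⟩ := hx
  nlinarith [sq_nonneg (x 1), sq_nonneg (x 2), sq_nonneg (x 0), pow_nonneg hε.le 10]

lemma arg_ge {ε : ℝ} (hε : 0 < ε) {x : Fin 4 → ℝ} (hx : x ∈ IKregion ε) : ε ≤ IKarg ε x := by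
  obtain ⟨h1, h2, h3⟩ := hx
  have h4 : ε⁻¹ * ε = 1 := inv_mul_cancel₀ hε.ne'
  have h5 : (0:ℝ) < ε⁻¹ := inv_pos.mpr hε
  have expand : ε⁻¹ * (x 0 + ε) * (x 3 + ε) = ε⁻¹ * (x 0 * x 3) + x 0 + x 3 + ε := by
    field_simp; ring
  have h7 : ε ≤ ε⁻¹ * (x 0 + ε) * (x 3 + ε) := by
    rw [expand]
    have : 0 ≤ ε⁻¹ * (x 0 * x 3) := by positivity
    linarith
  have h6 : (0:ℝ) ≤ ε^10 * ((x 0)^2 + (x 3)^2 + (x 1)^2 + (x 2)^2) := by positivity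
  unfold IKarg; linarith

lemma arg_le {ε : ℝ} (hε : 0 < ε) (hε2 : ε ≤ 1/2) {x : Fin 4 → ℝ} (hx : x ∈ IKregion ε) :
    IKarg ε x ≤ 3 := by
  have h0 := x0_le hε hx
  have h3 := x3_le hε hx
  have h4 : ε⁻¹ * ε = 1 := inv_mul_cancel₀ hε.ne'
  have h5 : (0:ℝ) < ε⁻¹ := inv_pos.mpr hε
  have he := eps10_le hε hε2
  obtain ⟨h1, h2, h3'⟩ := hx
  have hA : ε⁻¹ * (x 0 + ε) * (x 3 + ε) ≤ 4 * ε := by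
    calc ε⁻¹ * (x 0 + ε) * (x 3 + ε) = ε⁻¹ * ((x 0 + ε) * (x 3 + ε)) := by ring
    _ ≤ ε⁻¹ * ((2*ε) * (2*ε)) := by
        apply mul_le_mul_of_nonneg_left _ h5.le
        nlinarith
    _ = 4 * (ε⁻¹ * ε) * ε := by ring
    _ = 4 * ε := by rw [h4]; ring
  have hB : ε^10 * ((x 0)^2 + (x 3)^2 + (x 1)^2 + (x 2)^2) ≤ 1 := by
    have h10 : ε^10 ≤ 1 := by nlinarith
    have h20 : ε^20 ≤ 1 := by nlinarith [eps20_le hε hε2]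
    nlinarith [pow_nonneg hε.le 10, le_trans h1 h20]
  unfold IKarg; linarith

lemma weight_gain {ε : ℝ} (hε : 0 < ε) (hε2 : ε ≤ 1/2) {x : Fin 4 → ℝ} (hx : x ∈ IKregion ε)
    {t : ℝ} (ht : 0 ≤ t) (ht' : t ≤ x 0) :
    IKweight ε (Function.update x 0 t) + (x 0 - t)/3 ≤ IKweight ε x := by
  have hxt := upd_mem hx ht ht'
  have hgain : IKarg ε (Function.update x 0 t) + (x 0 - t) ≤ IKarg ε x := by
    have h4 : ε⁻¹ * ε = 1 := inv_mul_cancel₀ hε.ne'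
    have h5 : (0:ℝ) < ε⁻¹ := inv_pos.mpr hε
    unfold IKarg
    simp only [upd0, upd1, upd2, upd3]
    have e1 : ε⁻¹ * (x 0 + ε) * (x 3 + ε)
        = ε⁻¹ * (t + ε) * (x 3 + ε) + ε⁻¹ * ((x 0 - t) * x 3) + (x 0 - t) := by
      field_simp; ring
    have e2 : 0 ≤ ε⁻¹ * ((x 0 - t) * x 3) := by
      have := hx.2.2
      have h9 : 0 ≤ x 0 - t := by linarith
      positivity
    have e3 : 0 ≤ ε ^ 10 * (x 0 ^ 2 - t ^ 2) := by
      have h9 : t ^ 2 ≤ x 0 ^ 2 := by nlinarith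
      have := pow_nonneg hε.le 10
      nlinarith
    nlinarith
  have hp1 : 0 < IKarg ε (Function.update x 0 t) := lt_of_lt_of_le hε (arg_ge hε hxt)
  have hp2 : 0 < IKarg ε x := lt_of_lt_of_le hε (arg_ge hε hx)
  have hle3 : IKarg ε x ≤ 3 := arg_le hε hε2 hx
  rw [IKweight_eq_log, IKweight_eq_log]
  have hlog : Real.log (IKarg ε (Function.update x 0 t) / IKarg ε x)
      ≤ IKarg ε (Function.update x 0 t) / IKarg ε x - 1 :=
    Real.log_le_sub_one_of_pos (by positivity)
  rw [Real.log_div hp1.ne' hp2.ne'] at hlog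
  have h9 : 0 ≤ x 0 - t := by linarith
  have hstep : IKarg ε (Function.update x 0 t) / IKarg ε x ≤ 1 - (x 0 - t)/3 := by
    rw [div_le_iff₀ hp2]
    nlinarith [mul_nonneg h9 (by linarith : (0:ℝ) ≤ 3 - IKarg ε x)]
  linarith

end region

section oneD

lemma oneD_ode {F : ℝ → ℝ} (hF : Continuous F) (hFnn : ∀ t, 0 ≤ F t) {a b : ℝ}
    (ha : 0 < a) (hb : 0 ≤ b) :
    (∫ u in (0:ℝ)..b, ∫ t in (0:ℝ)..u, F t * Real.exp (-(a*(u-t))))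
      ≤ (1/a) * ∫ t in (0:ℝ)..b, F t := by
  set g : ℝ → ℝ := fun u => ∫ t in (0:ℝ)..u, F t * Real.exp (a*t) with hg
  set Φ : ℝ → ℝ := fun u => Real.exp (-(a*u)) * g u with hΦdef
  have hFe : Continuous fun t => F t * Real.exp (a*t) := by continuity
  have heq : ∀ u, (∫ t in (0:ℝ)..u, F t * Real.exp (-(a*(u-t)))) = Φ u := by
    intro u
    simp only [hΦdef, hg]
    rw [← intervalIntegral.integral_const_mul]
    apply intervalIntegral.integral_congr
    intro t _
    simp only []
    rw [show (-(a*(u-t))) = -(a*u) + a*t by ring, Real.exp_add]; ring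
  have hgd : ∀ u : ℝ, HasDerivAt g (F u * Real.exp (a*u)) u := by
    intro u
    exact (hFe.integral_hasStrictDerivAt 0 u).hasDerivAt
  have hed : ∀ u : ℝ, HasDerivAt (fun u : ℝ => Real.exp (-(a*u))) (-a * Real.exp (-(a*u))) u := by
    intro u
    have h1 : HasDerivAt (fun u : ℝ => -(a*u)) (-a) u := by
      simpa using ((hasDerivAt_id u).const_mul (-a)).congr_deriv (by ring)
    simpa [mul_comm] using h1.exp
  have hΦd : ∀ u : ℝ, HasDerivAt Φ (F u - a * Φ u) u := by
    intro u
    have := (hed u).mul (hgd u)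
    convert this using 1
    all_goals try rfl
    rw [hΦdef]
    have : Real.exp (-(a*u)) * (F u * Real.exp (a*u)) = F u := by
      rw [show Real.exp (-(a*u)) * (F u * Real.exp (a*u))
          = F u * (Real.exp (-(a*u)) * Real.exp (a*u)) by ring, ← Real.exp_add]
      simp
    simp only [this]
    ring_nf
  have hΦc : Continuous Φ := by
    rw [continuous_iff_continuousAt]; exact fun u => (hΦd u).continuousAt
  have hFTC : ∫ u in (0:ℝ)..b, (F u - a * Φ u) = Φ b - Φ 0 := by
    apply intervalIntegral.integral_eq_sub_of_hasDerivAt (fun u _ => hΦd u)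
    exact (hF.sub (continuous_const.mul hΦc)).intervalIntegrable _ _
  have hΦ0 : Φ 0 = 0 := by simp [hΦdef, hg]
  have hsub : ∫ u in (0:ℝ)..b, (F u - a * Φ u)
      = (∫ u in (0:ℝ)..b, F u) - a * ∫ u in (0:ℝ)..b, Φ u := by
    rw [intervalIntegral.integral_sub (f := F) (g := fun u => a * Φ u) (hF.intervalIntegrable _ _)
      ((continuous_const.mul hΦc).intervalIntegrable _ _ :
        IntervalIntegrable (fun u => a * Φ u) _ _ _),
      intervalIntegral.integral_const_mul]
  have hΦb : 0 ≤ Φ b := by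
    rw [hΦdef]
    apply mul_nonneg (Real.exp_nonneg _)
    apply intervalIntegral.integral_nonneg hb
    intro t _
    exact mul_nonneg (hFnn t) (Real.exp_nonneg _)
  have key : a * ∫ u in (0:ℝ)..b, Φ u ≤ ∫ u in (0:ℝ)..b, F u := by
    have := hFTC
    rw [hsub, hΦ0, sub_zero] at this
    linarith
  calc (∫ u in (0:ℝ)..b, ∫ t in (0:ℝ)..u, F t * Real.exp (-(a*(u-t))))
      = ∫ u in (0:ℝ)..b, Φ u := by
        apply intervalIntegral.integral_congr; intro u _; exact heq u
    _ ≤ (1/a) * ∫ t in (0:ℝ)..b, F t := by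
        rw [one_div, ← div_eq_inv_mul, le_div_iff₀ ha, mul_comm]
        exact key

lemma CS_1d {g : ℝ → ℝ} (hg : Continuous g) {u : ℝ} (hu : 0 ≤ u) :
    (∫ t in (0:ℝ)..u, g t)^2 ≤ u * ∫ t in (0:ℝ)..u, (g t)^2 := by
  rcases eq_or_lt_of_le hu with h | h
  · simp [← h]
  set I := ∫ t in (0:ℝ)..u, g t with hI
  set J := ∫ t in (0:ℝ)..u, (g t)^2 with hJ
  have hexp : ∫ t in (0:ℝ)..u, (g t - I/u)^2 = J - 2*(I/u)*I + (I/u)^2 * u := by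
    have h1 : ∀ t, (g t - I/u)^2 = (g t)^2 - 2*(I/u) * g t + (I/u)^2 := by intro t; ring
    simp_rw [h1]
    rw [intervalIntegral.integral_add, intervalIntegral.integral_sub]
    · rw [intervalIntegral.integral_const_mul, intervalIntegral.integral_const]
      simp [hI, hJ]; ring
    · exact (hg.pow 2).intervalIntegrable _ _
    · exact (continuous_const.mul hg).intervalIntegrable _ _
    · exact ((hg.pow 2).sub (continuous_const.mul hg)).intervalIntegrable _ _
    · exact continuous_const.intervalIntegrable _ _
  have hnn : 0 ≤ ∫ t in (0:ℝ)..u, (g t - I/u)^2 :=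
    intervalIntegral.integral_nonneg hu (fun t _ => sq_nonneg _)
  rw [hexp] at hnn
  have h2 : 0 ≤ J - I^2/u := by
    have : 2*(I/u)*I - (I/u)^2*u = I^2/u := by field_simp; ring
    nlinarith [this]
  have h3 : I^2/u * u = I^2 := by field_simp
  nlinarith [h2, h, h3]

end oneD

section gronwall

lemma gronwall_pt {ε A : ℝ} (hε : 0 < ε) (hε2 : ε ≤ 1/2) (hA : 0 < A)
    {v : Fin 4} {d T S : (Fin 4 → ℝ) → ℝ}
    (hd : ContDiff ℝ 3 d) (hT : Continuous T) (hS : Continuous S)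
    (hbc : ∀ x ∈ IKregion ε, x 0 = 0 →
      d x = 0 ∧ pd 0 d x = 0 ∧ pd v d x = 0 ∧ pd 0 (pd v d) x = 0)
    (hode1 : ∀ x ∈ IKregion ε, |pd 0 (pd 0 d) x| ≤ A * (|T x| + |pd 0 d x| + |d x|))
    (hode2 : ∀ x ∈ IKregion ε, |pd 0 (pd 0 (pd v d)) x| ≤
      A * (|S x| + |T x| + |pd 0 (pd v d) x| + |pd v d x| + |pd 0 d x| + |d x|))
    {x : Fin 4 → ℝ} (hx : x ∈ IKregion ε) :
    |pd v d x| + |pd 0 (pd v d) x| ≤ (2*(8*A+4)*Real.exp (8*A+4)) *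
      ∫ t in (0:ℝ)..(x 0), (|S (Function.update x 0 t)| + |T (Function.update x 0 t)|) := by
  set K : ℝ := 8*A+4 with hK
  have hKpos : 0 < K := by positivity
  set γ : ℝ → (Fin 4 → ℝ) := fun t => Function.update x 0 t with hγ
  have hγc : Continuous γ :=
    continuous_iff_continuousAt.mpr (fun t => (hasDerivAt_upd x t).continuousAt)
  -- smoothness bookkeeping
  have hd3 : ContDiff ℝ ((2:ℕ)+1 : ℕ) d := by exact_mod_cast hd
  have hdiff_d : Differentiable ℝ d := hd3.differentiable (by norm_num)
  have hC2_pd0 : ContDiff ℝ ((1:ℕ)+1:ℕ) (pd 0 d) := contDiff_pd hd3 0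
  have hC2_pdv : ContDiff ℝ ((1:ℕ)+1:ℕ) (pd v d) := contDiff_pd hd3 v
  have hdiff_pd0 : Differentiable ℝ (pd 0 d) := hC2_pd0.differentiable (by norm_num)
  have hdiff_pdv : Differentiable ℝ (pd v d) := hC2_pdv.differentiable (by norm_num)
  have hC1_pd00 : ContDiff ℝ ((0:ℕ)+1:ℕ) (pd 0 (pd 0 d)) := contDiff_pd hC2_pd0 0
  have hC1_pd0v : ContDiff ℝ ((0:ℕ)+1:ℕ) (pd 0 (pd v d)) := contDiff_pd hC2_pdv 0
  have hdiff_pd0v : Differentiable ℝ (pd 0 (pd v d)) := hC1_pd0v.differentiable (by norm_num)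
  have hcont_pd000v : Continuous (pd 0 (pd 0 (pd v d))) := continuous_pd hC1_pd0v 0
  have hcont_pd000 : Continuous (pd 0 (pd 0 d)) := continuous_pd hC2_pd0 0
  -- the four functions along the segment
  set c1 : ℝ → ℝ := fun t => d (γ t) with hc1def
  set c2 : ℝ → ℝ := fun t => pd 0 d (γ t) with hc2def
  set c3 : ℝ → ℝ := fun t => pd v d (γ t) with hc3def
  set c4 : ℝ → ℝ := fun t => pd 0 (pd v d) (γ t) with hc4def
  set d1 : ℝ → ℝ := fun t => pd 0 (pd 0 d) (γ t) with hd1def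
  set d2 : ℝ → ℝ := fun t => pd 0 (pd 0 (pd v d)) (γ t) with hd2def
  have hc1d : ∀ s, HasDerivAt c1 (c2 s) s := fun s => hasDerivAt_comp_upd hdiff_d x s
  have hc2d : ∀ s, HasDerivAt c2 (d1 s) s := fun s => hasDerivAt_comp_upd hdiff_pd0 x s
  have hc3d : ∀ s, HasDerivAt c3 (c4 s) s := fun s => hasDerivAt_comp_upd hdiff_pdv x s
  have hc4d : ∀ s, HasDerivAt c4 (d2 s) s := fun s => hasDerivAt_comp_upd hdiff_pd0v x s
  have hc2c : Continuous c2 := (hC2_pd0.continuous).comp hγc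
  have hc4c : Continuous c4 := (hC1_pd0v.continuous).comp hγc
  have hd1c : Continuous d1 := hcont_pd000.comp hγc
  have hd2c : Continuous d2 := hcont_pd000v.comp hγc
  set ρ : ℝ → ℝ := fun s => |c2 s| + |d1 s| + |c4 s| + |d2 s| with hρdef
  have hρc : Continuous ρ := ((hc2c.abs.add hd1c.abs).add hc4c.abs).add hd2c.abs
  set m : ℝ → ℝ := fun t => ∫ s in (0:ℝ)..t, ρ s with hm
  set G : ℝ → ℝ := fun s => |S (γ s)| + |T (γ s)| with hGdef
  have hGc : Continuous G := ((hS.comp hγc).abs).add ((hT.comp hγc).abs)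
  -- boundary values vanish
  have hγ0mem : γ 0 ∈ IKregion ε := upd_mem hx le_rfl hx.2.1
  have hγ00 : (γ 0) 0 = 0 := upd0 x 0
  obtain ⟨hz1, hz2, hz3, hz4⟩ := hbc (γ 0) hγ0mem hγ00
  -- |c i t| ≤ m t
  have habs : ∀ (φ φ' : ℝ → ℝ), (∀ s, HasDerivAt φ (φ' s) s) → Continuous φ' → φ 0 = 0 →
      (∀ s, |φ' s| ≤ ρ s) → ∀ t, 0 ≤ t → |φ t| ≤ m t := by
    intro φ φ' hder hcont h0 hle t ht
    have hftc : ∫ s in (0:ℝ)..t, φ' s = φ t - φ 0 :=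
      intervalIntegral.integral_eq_sub_of_hasDerivAt (fun s _ => hder s)
        (hcont.intervalIntegrable _ _)
    rw [h0, sub_zero] at hftc
    rw [← hftc]
    calc |∫ s in (0:ℝ)..t, φ' s| ≤ ∫ s in (0:ℝ)..t, |φ' s| :=
          intervalIntegral.abs_integral_le_integral_abs ht
    _ ≤ ∫ s in (0:ℝ)..t, ρ s := by
          apply intervalIntegral.integral_mono_on ht
            (hcont.abs.intervalIntegrable _ _) (hρc.intervalIntegrable _ _)
          intro s _; exact hle s
  have hρ_ge : ∀ s, |c2 s| ≤ ρ s ∧ |d1 s| ≤ ρ s ∧ |c4 s| ≤ ρ s ∧ |d2 s| ≤ ρ s := by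
    intro s
    have h1 := abs_nonneg (c2 s); have h2 := abs_nonneg (d1 s)
    have h3 := abs_nonneg (c4 s); have h4 := abs_nonneg (d2 s)
    refine ⟨?_, ?_, ?_, ?_⟩ <;> (simp only [hρdef]; linarith)
  have hb1 : ∀ t, 0 ≤ t → |c1 t| ≤ m t := habs c1 c2 hc1d hc2c hz1 (fun s => (hρ_ge s).1)
  have hb2 : ∀ t, 0 ≤ t → |c2 t| ≤ m t := habs c2 d1 hc2d hd1c hz2 (fun s => (hρ_ge s).2.1)
  have hb3 : ∀ t, 0 ≤ t → |c3 t| ≤ m t := habs c3 c4 hc3d hc4c hz3 (fun s => (hρ_ge s).2.2.1)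
  have hb4 : ∀ t, 0 ≤ t → |c4 t| ≤ m t := habs c4 d2 hc4d hd2c hz4 (fun s => (hρ_ge s).2.2.2)
  -- the differential inequality for ρ on [0, x 0]
  have hγmem : ∀ s, 0 ≤ s → s ≤ x 0 → γ s ∈ IKregion ε := fun s h h' => upd_mem hx h h'
  have hρ_le : ∀ s, 0 ≤ s → s ≤ x 0 → ρ s ≤ K * m s + K * G s := by
    intro s h0 h1
    have hmem := hγmem s h0 h1
    have e1 := hode1 (γ s) hmem
    have e2 := hode2 (γ s) hmem
    have b1 := hb1 s h0; have b2 := hb2 s h0; have b3 := hb3 s h0; have b4 := hb4 s h0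
    have hGnn : 0 ≤ G s := by simp only [hGdef]; positivity
    have hTle : |T (γ s)| ≤ G s := by
      simp only [hGdef]; have := abs_nonneg (S (γ s)); linarith
    have hSle : |S (γ s)| ≤ G s := by
      simp only [hGdef]; have := abs_nonneg (T (γ s)); linarith
    have hmnn : 0 ≤ m s := le_trans (abs_nonneg _) b1
    simp only [hρdef]
    have he1 : |d1 s| ≤ A * (G s + 2 * m s) := by
      refine le_trans e1 ?_
      have : |T (γ s)| + |pd 0 d (γ s)| + |d (γ s)| ≤ G s + 2 * m s := by
        have : |pd 0 d (γ s)| = |c2 s| := rfl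
        linarith [b1, b2, hTle]
      nlinarith [hA.le]
    have he2 : |d2 s| ≤ A * (2 * G s + 4 * m s) := by
      refine le_trans e2 ?_
      have : |S (γ s)| + |T (γ s)| + |pd 0 (pd v d) (γ s)| + |pd v d (γ s)|
          + |pd 0 d (γ s)| + |d (γ s)| ≤ 2 * G s + 4 * m s := by
        linarith [b1, b2, b3, b4, hSle, hTle]
      nlinarith [hA.le]
    have : |c2 s| + |c4 s| ≤ 2 * m s := by linarith
    have hKA : 6 * A + 2 ≤ K := by rw [hK]; linarith
    nlinarith [hA.le, hGnn, hmnn]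
  -- Gronwall via monotonicity
  set η : ℝ → ℝ := fun t => Real.exp (-(K*t)) * m t - K * ∫ s in (0:ℝ)..t, G s with hηdef
  have hmd : ∀ t, HasDerivAt m (ρ t) t := fun t => (hρc.integral_hasStrictDerivAt 0 t).hasDerivAt
  have hGi : ∀ t, HasDerivAt (fun t => ∫ s in (0:ℝ)..t, G s) (G t) t :=
    fun t => (hGc.integral_hasStrictDerivAt 0 t).hasDerivAt
  have hexpd : ∀ t : ℝ, HasDerivAt (fun t : ℝ => Real.exp (-(K*t))) (-K * Real.exp (-(K*t))) t := by
    intro t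
    have h1 : HasDerivAt (fun u : ℝ => -(K*u)) (-K) t := by
      simpa using ((hasDerivAt_id t).const_mul (-K)).congr_deriv (by ring)
    simpa [mul_comm] using h1.exp
  have hηd : ∀ t, HasDerivAt η (Real.exp (-(K*t)) * (ρ t - K * m t) - K * G t) t := by
    intro t
    have := ((hexpd t).mul (hmd t)).sub ((hGi t).const_mul K)
    convert this using 1
    all_goals try rfl
    ring
  have hη_le : η (x 0) ≤ η 0 := by
    rcases eq_or_lt_of_le hx.2.1 with h | h
    · rw [← h]
    · have hmono : AntitoneOn η (Set.Icc 0 (x 0)) := by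
        apply antitoneOn_of_deriv_nonpos (convex_Icc _ _)
        · exact Continuous.continuousOn (by
            rw [continuous_iff_continuousAt]; exact fun t => (hηd t).continuousAt)
        · intro t _
          exact (hηd t).differentiableAt.differentiableWithinAt
        · intro t ht
          rw [interior_Icc] at ht
          rw [(hηd t).deriv]
          have h0 : (0:ℝ) ≤ t := ht.1.le
          have h1 : t ≤ x 0 := ht.2.le
          have hρb := hρ_le t h0 h1
          have hexple : Real.exp (-(K*t)) ≤ 1 := by
            rw [Real.exp_le_one_iff]
            nlinarith
          have hGnn : 0 ≤ G t := by simp only [hGdef]; positivity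
          have hexpnn : 0 ≤ Real.exp (-(K*t)) := Real.exp_nonneg _
          have : Real.exp (-(K*t)) * (ρ t - K * m t) ≤ K * G t := by
            calc Real.exp (-(K*t)) * (ρ t - K * m t) ≤ Real.exp (-(K*t)) * (K * G t) := by
                  apply mul_le_mul_of_nonneg_left _ hexpnn
                  linarith
            _ ≤ 1 * (K * G t) := by
                  apply mul_le_mul_of_nonneg_right hexple (by positivity)
            _ = K * G t := by ring
          linarith
      exact hmono (Set.left_mem_Icc.mpr hx.2.1) (Set.right_mem_Icc.mpr hx.2.1) hx.2.1
  have hη0 : η 0 = 0 := by simp [hηdef, hm]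
  have hfinal : m (x 0) ≤ Real.exp (K * x 0) * (K * ∫ s in (0:ℝ)..(x 0), G s) := by
    have := hη_le
    rw [hη0, hηdef] at this
    simp only [sub_nonpos] at this
    have hexp_pos : (0:ℝ) < Real.exp (-(K * x 0)) := Real.exp_pos _
    have h2 : Real.exp (-(K * x 0)) * m (x 0) ≤ K * ∫ s in (0:ℝ)..(x 0), G s := by linarith
    have h3 := mul_le_mul_of_nonneg_left h2 (Real.exp_nonneg (K * x 0))
    rw [show Real.exp (K * x 0) * (Real.exp (-(K * x 0)) * m (x 0)) = m (x 0) by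
      rw [← mul_assoc, ← Real.exp_add]; simp] at h3
    exact h3
  -- conclude
  have hx0le1 : x 0 ≤ 1 := by
    have := x0_le hε hx
    have h10 := eps10_le hε hε2
    linarith
  have hGint_nn : 0 ≤ ∫ s in (0:ℝ)..(x 0), G s := by
    apply intervalIntegral.integral_nonneg hx.2.1
    intro s _; simp only [hGdef]; positivity
  have hexp_le : Real.exp (K * x 0) ≤ Real.exp K := by
    apply Real.exp_le_exp.mpr
    nlinarith [hx.2.1]
  have hmx : m (x 0) ≤ Real.exp K * (K * ∫ s in (0:ℝ)..(x 0), G s) := by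
    refine le_trans hfinal ?_
    apply mul_le_mul_of_nonneg_right hexp_le (by positivity)
  have hfin2 : |pd v d x| + |pd 0 (pd v d) x| ≤ 2 * m (x 0) := by
    have hγx : γ (x 0) = x := Function.update_eq_self 0 x
    have h3 := hb3 (x 0) hx.2.1
    have h4 := hb4 (x 0) hx.2.1
    have e3 : c3 (x 0) = pd v d x := by
      simp only [hc3def, hγ, Function.update_eq_self]
    have e4 : c4 (x 0) = pd 0 (pd v d) x := by
      simp only [hc4def, hγ, Function.update_eq_self]
    rw [e3] at h3; rw [e4] at h4
    linarith [h3, h4]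
  calc |pd v d x| + |pd 0 (pd v d) x| ≤ 2 * m (x 0) := hfin2
  _ ≤ 2 * (Real.exp K * (K * ∫ s in (0:ℝ)..(x 0), G s)) := by linarith
  _ = (2*K*Real.exp K) * ∫ s in (0:ℝ)..(x 0), G s := by ring

end gronwall

section regtop

lemma isClosed_IKregion (ε : ℝ) : IsClosed (IKregion ε) := by
  have : IKregion ε =
      ((fun x : Fin 4 → ℝ => (x 0)^2 + (x 3)^2 + (x 1)^2 + (x 2)^2) ⁻¹' Set.Iic (ε^20))
      ∩ ((fun x : Fin 4 → ℝ => x 0) ⁻¹' Set.Ici 0)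
      ∩ ((fun x : Fin 4 → ℝ => x 3) ⁻¹' Set.Ici 0) := by
    ext x; simp [IKregion, Set.mem_setOf_eq, and_assoc]
  rw [this]
  have hc : Continuous fun x : Fin 4 → ℝ => (x 0)^2 + (x 3)^2 + (x 1)^2 + (x 2)^2 := by fun_prop
  exact ((isClosed_Iic.preimage hc).inter (isClosed_Ici.preimage (continuous_apply 0))).inter
    (isClosed_Ici.preimage (continuous_apply 3))

lemma measurableSet_IKregion (ε : ℝ) : MeasurableSet (IKregion ε) :=
  (isClosed_IKregion ε).measurableSet

lemma isCompact_IKregion {ε : ℝ} (hε : 0 < ε) (hε2 : ε ≤ 1/2) : IsCompact (IKregion ε) := by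
  apply Metric.isCompact_of_isClosed_isBounded (isClosed_IKregion ε)
  rw [Metric.isBounded_iff_subset_closedBall 0]
  refine ⟨1, fun x hx => ?_⟩
  obtain ⟨h1, h2, h3⟩ := hx
  have h20 : ε^20 ≤ 1 := by nlinarith [eps20_le hε hε2]
  rw [Metric.mem_closedBall, dist_zero_right]
  rw [pi_norm_le_iff_of_nonneg (by norm_num : (0:ℝ) ≤ 1)]
  intro i
  have key : (x i)^2 ≤ 1 := by
    fin_cases i
    · show (x 0)^2 ≤ 1; nlinarith [sq_nonneg (x 1), sq_nonneg (x 2), sq_nonneg (x 3)]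
    · show (x 1)^2 ≤ 1; nlinarith [sq_nonneg (x 0), sq_nonneg (x 2), sq_nonneg (x 3)]
    · show (x 2)^2 ≤ 1; nlinarith [sq_nonneg (x 0), sq_nonneg (x 1), sq_nonneg (x 3)]
    · show (x 3)^2 ≤ 1; nlinarith [sq_nonneg (x 0), sq_nonneg (x 1), sq_nonneg (x 2)]
  rw [Real.norm_eq_abs]
  nlinarith [abs_nonneg (x i), sq_abs (x i)]

noncomputable def IKgw (ε : ℝ) (x : Fin 4 → ℝ) : ℝ := Real.log (max (IKarg ε x) ε)

lemma continuous_IKarg (ε : ℝ) : Continuous (IKarg ε) := by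
  unfold IKarg; fun_prop

lemma continuous_IKgw {ε : ℝ} (hε : 0 < ε) : Continuous (IKgw ε) := by
  apply Continuous.log ((continuous_IKarg ε).max continuous_const)
  intro x
  have : ε ≤ max (IKarg ε x) ε := le_max_right _ _
  linarith

lemma IKgw_eq {ε : ℝ} (hε : 0 < ε) {x : Fin 4 → ℝ} (hx : x ∈ IKregion ε) :
    IKgw ε x = IKweight ε x := by
  rw [IKgw, IKweight_eq_log, max_eq_left]
  linarith [arg_ge hε hx]

lemma continuous_upd_pair : Continuous (fun p : (Fin 4 → ℝ) × ℝ => Function.update p.1 0 p.2) := by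
  apply continuous_pi
  intro i
  by_cases h : i = 0
  · subst h
    simp only [Function.update_self]
    exact continuous_snd
  · simp only [Function.update_of_ne h]
    exact (continuous_apply i).comp continuous_fst

lemma continuous_cons (y : Fin 3 → ℝ) : Continuous (fun t : ℝ => Fin.cons t y : ℝ → (Fin 4 → ℝ)) := by
  apply continuous_pi
  intro i
  refine Fin.cases ?_ ?_ i
  · simp only [Fin.cons_zero]; exact continuous_id
  · intro j; simp only [Fin.cons_succ]; exact continuous_const

end regtop

section fubini

lemma cons_c1 (u : ℝ) (y : Fin 3 → ℝ) : (Fin.cons u y : Fin 4 → ℝ) 1 = y 0 := by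
  rfl
lemma cons_c2 (u : ℝ) (y : Fin 3 → ℝ) : (Fin.cons u y : Fin 4 → ℝ) 2 = y 1 := by
  rfl
lemma cons_c3 (u : ℝ) (y : Fin 3 → ℝ) : (Fin.cons u y : Fin 4 → ℝ) 3 = y 2 := by
  rfl

lemma cons_mem_iff {ε : ℝ} (u : ℝ) (y : Fin 3 → ℝ) :
    (Fin.cons u y : Fin 4 → ℝ) ∈ IKregion ε ↔
      (u^2 + (y 2)^2 + (y 0)^2 + (y 1)^2 ≤ ε^20 ∧ 0 ≤ u ∧ 0 ≤ y 2) := by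
  unfold IKregion
  rw [Set.mem_setOf_eq, Fin.cons_zero, cons_c1, cons_c2, cons_c3]

lemma fubini_step {ε : ℝ} (hε : 0 < ε) (hε2 : ε ≤ 1/2) {Q : (Fin 4 → ℝ) → ℝ}
    (hQ : Continuous Q) (hQnn : ∀ z, 0 ≤ Q z) {a : ℝ} (ha : 0 < a) :
    (∫ x in IKregion ε,
       ∫ t in (0:ℝ)..(x 0), Q (Function.update x 0 t) * Real.exp (-(a*(x 0 - t))))
      ≤ (1/a) * ∫ x in IKregion ε, Q x := by
  set B := IKregion ε with hB
  have hmeas : MeasurableSet B := measurableSet_IKregion ε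
  have hcompact : IsCompact B := isCompact_IKregion hε hε2
  set R : (Fin 4 → ℝ) → ℝ := fun x =>
    ∫ t in (0:ℝ)..(x 0), Q (Function.update x 0 t) * Real.exp (-(a*(x 0 - t))) with hR
  have hRc : Continuous R := by
    apply intervalIntegral.continuous_parametric_intervalIntegral_of_continuous
      (f := fun x t => Q (Function.update x 0 t) * Real.exp (-(a*(x 0 - t))))
      (s := fun x => x 0)
    · apply Continuous.mul
      · exact hQ.comp (continuous_upd_pair.comp (continuous_fst.prodMk continuous_snd))
      · apply Real.continuous_exp.comp
        fun_prop
    · exact continuous_apply 0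
  have hRint : IntegrableOn R B := hRc.continuousOn.integrableOn_compact hcompact
  have hQint : IntegrableOn Q B := hQ.continuousOn.integrableOn_compact hcompact
  have hindR : Integrable (B.indicator R) := (integrable_indicator_iff hmeas).mpr hRint
  have hindQ : Integrable (B.indicator Q) := (integrable_indicator_iff hmeas).mpr hQint
  set e := MeasurableEquiv.piFinSuccAbove (fun _ : Fin 4 => ℝ) 0 with he
  have mp : MeasurePreserving e := volume_preserving_piFinSuccAbove (fun _ : Fin 4 => ℝ) 0
  have mps : MeasurePreserving e.symm := mp.symm e
  have hsymm_apply : ∀ (u : ℝ) (y : Fin 3 → ℝ), e.symm (u, y) = Fin.cons u y := by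
    intro u y
    show (MeasurableEquiv.piFinSuccAbove (fun _ : Fin 4 => ℝ) 0).symm (u, y) = _
    simp only [MeasurableEquiv.piFinSuccAbove, MeasurableEquiv.symm_mk,
      MeasurableEquiv.coe_mk, Equiv.symm_symm, Fin.insertNthEquiv_apply]
    exact Fin.insertNth_zero' u y
  have hprodR : Integrable ((B.indicator R) ∘ e.symm) (volume.prod volume) := by
    rw [← MeasureTheory.Measure.volume_eq_prod _ _]
    exact (mps.integrable_comp_emb e.symm.measurableEmbedding).mpr hindR
  have hprodQ : Integrable ((B.indicator Q) ∘ e.symm) (volume.prod volume) := by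
    rw [← MeasureTheory.Measure.volume_eq_prod _ _]
    exact (mps.integrable_comp_emb e.symm.measurableEmbedding).mpr hindQ
  -- pointwise-in-y inequality
  have key : ∀ y : Fin 3 → ℝ,
      (∫ u : ℝ, (B.indicator R) (e.symm (u, y)))
        ≤ (1/a) * ∫ u : ℝ, (B.indicator Q) (e.symm (u, y)) := by
    intro y
    have hconsQ : Continuous fun t : ℝ => Q (Fin.cons t y) := hQ.comp (continuous_cons y)
    by_cases hgood : 0 ≤ y 2 ∧ (y 2)^2 + (y 0)^2 + (y 1)^2 ≤ ε^20
    · set b : ℝ := Real.sqrt (ε^20 - ((y 2)^2 + (y 0)^2 + (y 1)^2)) with hb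
      have hb0 : 0 ≤ b := Real.sqrt_nonneg _
      have hmem_iff : ∀ u : ℝ, (Fin.cons u y : Fin 4 → ℝ) ∈ B ↔ u ∈ Set.Icc 0 b := by
        intro u
        rw [hB, cons_mem_iff, Set.mem_Icc]
        constructor
        · rintro ⟨h1, h2, -⟩
          refine ⟨h2, ?_⟩
          rw [hb]
          rw [show u = Real.sqrt (u^2) by rw [Real.sqrt_sq h2]]
          apply Real.sqrt_le_sqrt
          linarith
        · rintro ⟨h2, h3⟩
          refine ⟨?_, h2, hgood.1⟩
          have : u^2 ≤ b^2 := by nlinarith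
          have hbsq : b^2 = ε^20 - ((y 2)^2 + (y 0)^2 + (y 1)^2) := by
            rw [hb, Real.sq_sqrt]; linarith [hgood.2]
          nlinarith
      have hindic : ∀ (φ : (Fin 4 → ℝ) → ℝ) (u : ℝ),
          (B.indicator φ) (e.symm (u, y))
            = (Set.Icc 0 b).indicator (fun u => φ (Fin.cons u y)) u := by
        intro φ u
        rw [hsymm_apply]
        by_cases h : u ∈ Set.Icc 0 b
        · simp [Set.indicator_apply, (hmem_iff u).mpr h, h]
        · have h' : (Fin.cons u y : Fin 4 → ℝ) ∉ B := fun hh => h ((hmem_iff u).mp hh)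
          simp [Set.indicator_apply, h, h']
      have hRside : (∫ u : ℝ, (B.indicator R) (e.symm (u, y)))
          = ∫ u in (0:ℝ)..b, R (Fin.cons u y) := by
        simp_rw [hindic R]
        rw [MeasureTheory.integral_indicator measurableSet_Icc,
          MeasureTheory.integral_Icc_eq_integral_Ioc,
          ← intervalIntegral.integral_of_le hb0]
      have hQside : (∫ u : ℝ, (B.indicator Q) (e.symm (u, y)))
          = ∫ u in (0:ℝ)..b, Q (Fin.cons u y) := by
        simp_rw [hindic Q]
        rw [MeasureTheory.integral_indicator measurableSet_Icc,
          MeasureTheory.integral_Icc_eq_integral_Ioc,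
          ← intervalIntegral.integral_of_le hb0]
      rw [hRside, hQside]
      have hReq : ∀ u : ℝ, R (Fin.cons u y)
          = ∫ t in (0:ℝ)..u, Q (Fin.cons t y) * Real.exp (-(a*(u - t))) := by
        intro u
        rw [hR]
        simp only [Fin.cons_zero, Fin.update_cons_zero]
      calc (∫ u in (0:ℝ)..b, R (Fin.cons u y))
          = ∫ u in (0:ℝ)..b, ∫ t in (0:ℝ)..u, Q (Fin.cons t y) * Real.exp (-(a*(u - t))) := by
            apply intervalIntegral.integral_congr
            intro u _; exact hReq u
        _ ≤ (1/a) * ∫ t in (0:ℝ)..b, Q (Fin.cons t y) :=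
            oneD_ode hconsQ (fun t => hQnn _) ha hb0
    · -- bad y : empty section
      have hempty : ∀ u : ℝ, (Fin.cons u y : Fin 4 → ℝ) ∉ B := by
        intro u hu
        rw [hB, cons_mem_iff] at hu
        push_neg at hgood
        obtain ⟨h1, h2, h3⟩ := hu
        have := hgood h3
        nlinarith [sq_nonneg u]
      have hz : ∀ (φ : (Fin 4 → ℝ) → ℝ) (u : ℝ), (B.indicator φ) (e.symm (u, y)) = 0 := by
        intro φ u
        rw [hsymm_apply]
        exact Set.indicator_of_notMem (hempty u) _
      simp_rw [hz R, hz Q]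
      simp
  -- assemble
  have hL : (∫ x in B, R x) = ∫ y : Fin 3 → ℝ, ∫ u : ℝ, (B.indicator R) (e.symm (u, y)) := by
    rw [← MeasureTheory.integral_indicator hmeas]
    rw [← mps.integral_comp e.symm.measurableEmbedding (B.indicator R)]
    rw [show (volume : Measure ((ℝ) × (Fin 3 → ℝ))) = volume.prod volume from
      MeasureTheory.Measure.volume_eq_prod _ _]
    exact MeasureTheory.integral_prod_symm _ hprodR
  have hQeq : (∫ x in B, Q x) = ∫ y : Fin 3 → ℝ, ∫ u : ℝ, (B.indicator Q) (e.symm (u, y)) := by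
    rw [← MeasureTheory.integral_indicator hmeas]
    rw [← mps.integral_comp e.symm.measurableEmbedding (B.indicator Q)]
    rw [show (volume : Measure ((ℝ) × (Fin 3 → ℝ))) = volume.prod volume from
      MeasureTheory.Measure.volume_eq_prod _ _]
    exact MeasureTheory.integral_prod_symm _ hprodQ
  rw [hL, hQeq]
  rw [← MeasureTheory.integral_const_mul]
  apply MeasureTheory.integral_mono
  · have h1 : Integrable (fun y : Fin 3 → ℝ => ∫ u : ℝ, ((B.indicator R) ∘ e.symm) (u, y)) :=
      hprodR.integral_prod_right
    exact h1
  · have h2 : Integrable (fun y : Fin 3 → ℝ => ∫ u : ℝ, ((B.indicator Q) ∘ e.symm) (u, y)) :=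
      hprodQ.integral_prod_right
    exact h2.const_mul _
  · exact key

end fubini

section integrability

lemma measurable_IKweight (ε : ℝ) : Measurable (IKweight ε) := by
  have : IKweight ε = fun x => Real.log (IKarg ε x) := funext (IKweight_eq_log ε)
  rw [this]
  exact Real.measurable_log.comp (continuous_IKarg ε).measurable

lemma integrableOn_weighted {ε M lam : ℝ} (hε : 0 < ε) (hε2 : ε ≤ 1/2)
    {φ : (Fin 4 → ℝ) → ℝ} (hφ : Continuous φ) {ω : (Fin 4 → ℝ) → ℝ} (hω : Measurable ω)
    (hbound : ∀ x ∈ IKregion ε, |ω x| ≤ M) :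
    IntegrableOn (fun x => (φ x)^2 * Real.exp (-(2*lam) * IKweight ε x) * ω x) (IKregion ε) := by
  have hmeas := measurableSet_IKregion ε
  have hcompact := isCompact_IKregion hε hε2
  have hfin : volume (IKregion ε) < ⊤ := hcompact.measure_lt_top
  have hEm : Measurable fun x => Real.exp (-(2*lam) * IKweight ε x) :=
    Real.measurable_exp.comp ((measurable_IKweight ε).const_mul _)
  have hfm : Measurable fun x => (φ x)^2 * Real.exp (-(2*lam) * IKweight ε x) * ω x :=
    (((hφ.measurable.pow measurable_const)).mul hEm).mul hω
  obtain ⟨C1, hC1⟩ := hcompact.exists_bound_of_continuousOn hφ.continuousOn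
  set D : ℝ := |2*lam| * (|Real.log ε| + |Real.log 3|) with hD
  have hEb : ∀ x ∈ IKregion ε, Real.exp (-(2*lam) * IKweight ε x) ≤ Real.exp D := by
    intro x hx
    apply Real.exp_le_exp.mpr
    have h1 : Real.log ε ≤ IKweight ε x := by
      rw [IKweight_eq_log]
      exact Real.log_le_log hε (arg_ge hε hx)
    have h2 : IKweight ε x ≤ Real.log 3 := by
      rw [IKweight_eq_log]
      apply Real.log_le_log (lt_of_lt_of_le hε (arg_ge hε hx)) (arg_le hε hε2 hx)
    have habs : |IKweight ε x| ≤ |Real.log ε| + |Real.log 3| := by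
      rw [abs_le]
      constructor
      · have := neg_abs_le (Real.log ε)
        have := abs_nonneg (Real.log 3)
        linarith
      · have := le_abs_self (Real.log 3)
        have := abs_nonneg (Real.log ε)
        linarith
    calc -(2*lam) * IKweight ε x ≤ |(-(2*lam)) * IKweight ε x| := le_abs_self _
    _ = |2*lam| * |IKweight ε x| := by rw [abs_mul, abs_neg]
    _ ≤ |2*lam| * (|Real.log ε| + |Real.log 3|) :=
        mul_le_mul_of_nonneg_left habs (abs_nonneg _)
    _ = D := hD.symm
  apply Integrable.mono' (g := fun _ => C1^2 * Real.exp D * M)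
    ((integrableOn_const_iff).mpr (Or.inr hfin)) hfm.aestronglyMeasurable
  filter_upwards [ae_restrict_mem hmeas] with x hx
  have h1 : |φ x| ≤ C1 := by
    have := hC1 x hx
    rwa [Real.norm_eq_abs] at this
  have h2 := hEb x hx
  have h3 := hbound x hx
  have h4 : (0:ℝ) ≤ Real.exp (-(2*lam) * IKweight ε x) := Real.exp_nonneg _
  have h5 : (φ x)^2 ≤ C1^2 := by nlinarith [abs_nonneg (φ x), sq_abs (φ x)]
  rw [Real.norm_eq_abs, abs_mul, abs_mul]
  have h6 : |(φ x)^2| = (φ x)^2 := abs_of_nonneg (sq_nonneg _)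
  have h7 : |Real.exp (-(2*lam) * IKweight ε x)| = Real.exp (-(2*lam) * IKweight ε x) :=
    abs_of_nonneg h4
  rw [h6, h7]
  have hC1nn : 0 ≤ C1 := le_trans (abs_nonneg _) h1
  have hMnn : 0 ≤ M := le_trans (abs_nonneg _) h3
  calc (φ x)^2 * Real.exp (-(2*lam) * IKweight ε x) * |ω x|
      ≤ C1^2 * Real.exp D * M := by
        apply mul_le_mul
        · apply mul_le_mul h5 h2 h4 (by positivity)
        · exact h3
        · exact abs_nonneg _
        · positivity

end integrability


lemma sqrt_add_le' (a b : ℝ) (ha : 0 ≤ a) (hb : 0 ≤ b) :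
    Real.sqrt (a+b) ≤ Real.sqrt a + Real.sqrt b := by
  have h : a + b ≤ (Real.sqrt a + Real.sqrt b)^2 := by
    nlinarith [Real.sq_sqrt ha, Real.sq_sqrt hb, Real.sqrt_nonneg a, Real.sqrt_nonneg b,
      mul_nonneg (Real.sqrt_nonneg a) (Real.sqrt_nonneg b)]
  calc Real.sqrt (a+b) ≤ Real.sqrt ((Real.sqrt a + Real.sqrt b)^2) := Real.sqrt_le_sqrt h
  _ = Real.sqrt a + Real.sqrt b := Real.sqrt_sq (by positivity)

/-- Abstract form of the higher-order estimates (easyeqn2)–(easyeqn3) of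
the paper's Lemma `easylem`. -/
theorem IK_easy_lemma_higher (ε μ M A : ℝ) (hε : 0 < ε) (hε2 : ε ≤ 1/2)
    (hμ : 0 < μ) (hμM : μ ≤ M) (hA : 0 < A) :
    ∃ lam₀ > 0, ∃ C > 0, ∀ v : Fin 4, (v = 1 ∨ v = 2 ∨ v = 3) →
      ∀ ω : (Fin 4 → ℝ) → ℝ, Measurable ω →
      (∀ x ∈ IKregion ε, μ ≤ ω x ∧ ω x ≤ M) →
      ∀ d T S : (Fin 4 → ℝ) → ℝ, ContDiff ℝ 3 d → Continuous T → Continuous S →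
        (∀ x ∈ IKregion ε, x 0 = 0 →
          d x = 0 ∧ pd 0 d x = 0 ∧ pd v d x = 0 ∧ pd 0 (pd v d) x = 0) →
        (∀ x ∈ IKregion ε,
          |pd 0 (pd 0 d) x| ≤ A * (|T x| + |pd 0 d x| + |d x|)) →
        (∀ x ∈ IKregion ε,
          |pd 0 (pd 0 (pd v d)) x| ≤
            A * (|S x| + |T x| + |pd 0 (pd v d) x| + |pd v d x| + |pd 0 d x| + |d x|)) →
        ∀ lam : ℝ, lam₀ ≤ lam →
          IKnorm ε ω lam (pd v d) + IKnorm ε ω lam (pd 0 (pd v d))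
            ≤ C / Real.sqrt lam * (IKnorm ε ω lam S + IKnorm ε ω lam T) := by
  classical
  set K₁ : ℝ := 2*(8*A+4)*Real.exp (8*A+4) with hK₁
  have hK₁pos : 0 < K₁ := by positivity
  set C : ℝ := Real.sqrt (6*M*K₁^2/μ) with hC
  have hMpos : 0 < M := lt_of_lt_of_le hμ hμM
  have hCpos : 0 < C := Real.sqrt_pos.mpr (by positivity)
  refine ⟨1, one_pos, C, hCpos, ?_⟩
  intro v _ ω hωm hωb d T S hd hT hS hbc hode1 hode2 lam hlam
  have hlam0 : (0:ℝ) < lam := lt_of_lt_of_le one_pos hlam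
  set B := IKregion ε with hBdef
  have hmeas : MeasurableSet B := measurableSet_IKregion ε
  have hcompact : IsCompact B := isCompact_IKregion hε hε2
  set a : ℝ := 2*lam/3 with ha_def
  have ha : 0 < a := by positivity
  -- smoothness facts
  have hd3 : ContDiff ℝ ((2:ℕ)+1 : ℕ) d := by exact_mod_cast hd
  have hC2_pdv : ContDiff ℝ ((1:ℕ)+1:ℕ) (pd v d) := contDiff_pd hd3 v
  have hpdvc : Continuous (pd v d) := hC2_pdv.continuous
  have hpd0vc : Continuous (pd 0 (pd v d)) := (contDiff_pd hC2_pdv 0).continuous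
  -- weight and Q
  set E : (Fin 4 → ℝ) → ℝ := fun x => Real.exp (-(2*lam) * IKweight ε x) with hEdef
  set Q : (Fin 4 → ℝ) → ℝ :=
    fun z => (|S z| + |T z|)^2 * Real.exp (-(2*lam) * IKgw ε z) with hQdef
  have hQc : Continuous Q := by
    apply Continuous.mul
    · exact ((hS.abs.add hT.abs).pow 2)
    · exact Real.continuous_exp.comp (continuous_const.mul (continuous_IKgw hε))
  have hQnn : ∀ z, 0 ≤ Q z := fun z => mul_nonneg (sq_nonneg _) (Real.exp_nonneg _)
  set Rf : (Fin 4 → ℝ) → ℝ := fun x =>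
    ∫ t in (0:ℝ)..(x 0), Q (Function.update x 0 t) * Real.exp (-(a*(x 0 - t))) with hRfdef
  have hRfc : Continuous Rf := by
    apply intervalIntegral.continuous_parametric_intervalIntegral_of_continuous
      (f := fun x t => Q (Function.update x 0 t) * Real.exp (-(a*(x 0 - t))))
      (s := fun x => x 0)
    · apply Continuous.mul
      · exact hQc.comp (continuous_upd_pair.comp (continuous_fst.prodMk continuous_snd))
      · apply Real.continuous_exp.comp
        fun_prop
    · exact continuous_apply 0
  -- pointwise estimate on B
  have hpt : ∀ x ∈ B, ((pd v d x)^2 + (pd 0 (pd v d) x)^2) * E x * ω x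
      ≤ M * (K₁^2 * Rf x) := by
    intro x hx
    have hx0 : (0:ℝ) ≤ x 0 := hx.2.1
    have hx0le1 : x 0 ≤ 1 := by
      have := x0_le hε hx
      have := eps10_le hε hε2
      linarith
    have hγc : Continuous fun t : ℝ => Function.update x 0 t :=
      continuous_upd_pair.comp (continuous_const.prodMk continuous_id)
    have hGtc : Continuous fun t : ℝ =>
        |S (Function.update x 0 t)| + |T (Function.update x 0 t)| :=
      ((hS.comp hγc).abs).add ((hT.comp hγc).abs)
    have hGr := gronwall_pt hε hε2 hA hd hT hS hbc hode1 hode2 hx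
    set IG : ℝ := ∫ t in (0:ℝ)..(x 0),
      (|S (Function.update x 0 t)| + |T (Function.update x 0 t)|) with hIGdef
    set J : ℝ := ∫ t in (0:ℝ)..(x 0),
      (|S (Function.update x 0 t)| + |T (Function.update x 0 t)|)^2 with hJdef
    have hJnn : 0 ≤ J := by
      apply intervalIntegral.integral_nonneg hx0
      intro t _; positivity
    have hCS : IG^2 ≤ x 0 * J := CS_1d hGtc hx0
    have hIG2 : IG^2 ≤ J := by nlinarith
    set P : ℝ := |pd v d x| + |pd 0 (pd v d) x| with hPdef
    have hPnn : 0 ≤ P := by positivity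
    have hP2 : P^2 ≤ K₁^2 * J := by
      have h1 : P ≤ K₁ * IG := hGr
      have hIGnn : 0 ≤ IG := by
        apply intervalIntegral.integral_nonneg hx0
        intro t _; positivity
      nlinarith [mul_nonneg hK₁pos.le hIGnn]
    -- weight comparison inside integral
    have hweight : ∀ t ∈ Set.Icc (0:ℝ) (x 0),
        (|S (Function.update x 0 t)| + |T (Function.update x 0 t)|)^2 * E x
          ≤ Q (Function.update x 0 t) * Real.exp (-(a*(x 0 - t))) := by
      intro t ht
      obtain ⟨ht0, ht1⟩ := ht
      have hwg := weight_gain hε hε2 hx ht0 ht1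
      have humem := upd_mem hx ht0 ht1
      have hgw : IKgw ε (Function.update x 0 t) = IKweight ε (Function.update x 0 t) :=
        IKgw_eq hε humem
      have hExp : E x ≤ Real.exp (-(2*lam) * IKgw ε (Function.update x 0 t))
          * Real.exp (-(a*(x 0 - t))) := by
        rw [hEdef, hgw, ← Real.exp_add]
        apply Real.exp_le_exp.mpr
        have h2lam : (0:ℝ) < 2*lam := by linarith
        have := mul_le_mul_of_nonneg_left hwg h2lam.le
        nlinarith
      calc (|S (Function.update x 0 t)| + |T (Function.update x 0 t)|)^2 * E x
          ≤ (|S (Function.update x 0 t)| + |T (Function.update x 0 t)|)^2 *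
            (Real.exp (-(2*lam) * IKgw ε (Function.update x 0 t))
              * Real.exp (-(a*(x 0 - t)))) :=
            mul_le_mul_of_nonneg_left hExp (sq_nonneg _)
      _ = Q (Function.update x 0 t) * Real.exp (-(a*(x 0 - t))) := by
            rw [hQdef]; ring
    have hJE : J * E x ≤ Rf x := by
      have hmul : J * E x = ∫ t in (0:ℝ)..(x 0),
          (|S (Function.update x 0 t)| + |T (Function.update x 0 t)|)^2 * E x := by
        rw [hJdef, intervalIntegral.integral_mul_const]
      rw [hmul, hRfdef]
      apply intervalIntegral.integral_mono_on hx0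
      · exact ((hGtc.pow 2).mul continuous_const).intervalIntegrable _ _
      · apply Continuous.intervalIntegrable
        apply Continuous.mul (hQc.comp hγc)
        exact Real.continuous_exp.comp (by fun_prop)
      · exact hweight
    have hEnn : 0 ≤ E x := Real.exp_nonneg _
    have hω1 : μ ≤ ω x := (hωb x hx).1
    have hω2 : ω x ≤ M := (hωb x hx).2
    have hωnn : 0 ≤ ω x := le_trans hμ.le hω1
    have hsq : (pd v d x)^2 + (pd 0 (pd v d) x)^2 ≤ P^2 := by
      rw [hPdef]
      nlinarith [abs_nonneg (pd v d x), abs_nonneg (pd 0 (pd v d) x),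
        sq_abs (pd v d x), sq_abs (pd 0 (pd v d) x),
        mul_nonneg (abs_nonneg (pd v d x)) (abs_nonneg (pd 0 (pd v d) x))]
    have hc1 : ((pd v d x)^2 + (pd 0 (pd v d) x)^2) * E x * ω x ≤ P^2 * E x * ω x := by
      apply mul_le_mul_of_nonneg_right (mul_le_mul_of_nonneg_right hsq hEnn) hωnn
    have hc2 : P^2 * E x * ω x ≤ P^2 * E x * M :=
      mul_le_mul_of_nonneg_left hω2 (by positivity)
    have hc3 : P^2 * E x ≤ K₁^2 * Rf x := by
      calc P^2 * E x ≤ (K₁^2 * J) * E x := mul_le_mul_of_nonneg_right hP2 hEnn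
      _ = K₁^2 * (J * E x) := by ring
      _ ≤ K₁^2 * Rf x := mul_le_mul_of_nonneg_left hJE (by positivity)
    calc ((pd v d x)^2 + (pd 0 (pd v d) x)^2) * E x * ω x
        ≤ P^2 * E x * M := le_trans hc1 hc2
    _ ≤ (K₁^2 * Rf x) * M := mul_le_mul_of_nonneg_right hc3 hMpos.le
    _ = M * (K₁^2 * Rf x) := by ring
  -- integrability
  have hωabs : ∀ x ∈ IKregion ε, |ω x| ≤ M := by
    intro x hx
    rw [abs_of_nonneg (le_trans hμ.le (hωb x hx).1)]
    exact (hωb x hx).2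
  have hint1 : IntegrableOn (fun x => (pd v d x)^2 * E x * ω x) B :=
    integrableOn_weighted hε hε2 hpdvc hωm hωabs
  have hint2 : IntegrableOn (fun x => (pd 0 (pd v d) x)^2 * E x * ω x) B :=
    integrableOn_weighted hε hε2 hpd0vc hωm hωabs
  have hintS : IntegrableOn (fun x => (S x)^2 * E x * ω x) B :=
    integrableOn_weighted hε hε2 hS hωm hωabs
  have hintT : IntegrableOn (fun x => (T x)^2 * E x * ω x) B :=
    integrableOn_weighted hε hε2 hT hωm hωabs
  have hintRf : IntegrableOn Rf B := hRfc.continuousOn.integrableOn_compact hcompact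
  have hintQ : IntegrableOn Q B := hQc.continuousOn.integrableOn_compact hcompact
  set N1 : ℝ := ∫ x in B, (pd v d x)^2 * E x * ω x with hN1
  set N2 : ℝ := ∫ x in B, (pd 0 (pd v d) x)^2 * E x * ω x with hN2
  set NS : ℝ := ∫ x in B, (S x)^2 * E x * ω x with hNS
  set NT : ℝ := ∫ x in B, (T x)^2 * E x * ω x with hNT
  have hωnnB : ∀ x ∈ B, (0:ℝ) ≤ ω x := fun x hx => le_trans hμ.le (hωb x hx).1
  have hN1nn : 0 ≤ N1 := setIntegral_nonneg hmeas (fun x hx => by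
    have := hωnnB x hx; positivity)
  have hN2nn : 0 ≤ N2 := setIntegral_nonneg hmeas (fun x hx => by
    have := hωnnB x hx; positivity)
  have hNSnn : 0 ≤ NS := setIntegral_nonneg hmeas (fun x hx => by
    have := hωnnB x hx; positivity)
  have hNTnn : 0 ≤ NT := setIntegral_nonneg hmeas (fun x hx => by
    have := hωnnB x hx; positivity)
  -- main integral chain
  have hsum : N1 + N2 ≤ M * K₁^2 * ((1/a) * ∫ x in B, Q x) := by
    have e1 : N1 + N2 = ∫ x in B, ((pd v d x)^2 * E x * ω x
        + (pd 0 (pd v d) x)^2 * E x * ω x) := (integral_add hint1 hint2).symm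
    have e2 : ∀ x ∈ B, (pd v d x)^2 * E x * ω x + (pd 0 (pd v d) x)^2 * E x * ω x
        ≤ M * (K₁^2 * Rf x) := by
      intro x hx
      have := hpt x hx
      nlinarith [this]
    have e3 : N1 + N2 ≤ ∫ x in B, M * (K₁^2 * Rf x) := by
      rw [e1]
      apply setIntegral_mono_on (hint1.add hint2) ((hintRf.const_mul _).const_mul _) hmeas e2
    have e4 : (∫ x in B, M * (K₁^2 * Rf x)) = M * K₁^2 * ∫ x in B, Rf x := by
      rw [show (fun x => M * (K₁^2 * Rf x)) = fun x => (M * K₁^2) * Rf x by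
        funext x; ring]
      exact integral_const_mul _ _
    have e5 : (∫ x in B, Rf x) ≤ (1/a) * ∫ x in B, Q x := fubini_step hε hε2 hQc hQnn ha
    calc N1 + N2 ≤ M * K₁^2 * ∫ x in B, Rf x := by rw [← e4]; exact e3
    _ ≤ M * K₁^2 * ((1/a) * ∫ x in B, Q x) :=
        mul_le_mul_of_nonneg_left e5 (by positivity)
  have hQle : (∫ x in B, Q x) ≤ (2/μ) * (NS + NT) := by
    have e2 : ∀ x ∈ B, Q x ≤ (2/μ) * ((S x)^2 * E x * ω x + (T x)^2 * E x * ω x) := by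
      intro x hx
      have hgw : IKgw ε x = IKweight ε x := IKgw_eq hε hx
      have hω1 : μ ≤ ω x := (hωb x hx).1
      have hEnn : 0 ≤ E x := Real.exp_nonneg _
      have hQx : Q x = (|S x| + |T x|)^2 * E x := by
        simp only [hQdef, hEdef]
        rw [hgw]
      rw [hQx]
      have h1 : (|S x| + |T x|)^2 ≤ 2 * ((S x)^2 + (T x)^2) := by
        nlinarith [sq_abs (S x), sq_abs (T x), sq_nonneg (|S x| - |T x|)]
      have h2 : (|S x| + |T x|)^2 * E x ≤ 2 * ((S x)^2 + (T x)^2) * E x :=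
        mul_le_mul_of_nonneg_right h1 hEnn
      have h3 : 2 * ((S x)^2 + (T x)^2) * E x
          ≤ (2/μ) * (((S x)^2 + (T x)^2) * E x * ω x) := by
        have hnn : 0 ≤ ((S x)^2 + (T x)^2) * E x := by positivity
        rw [show (2/μ) * (((S x)^2 + (T x)^2) * E x * ω x)
            = (((S x)^2 + (T x)^2) * E x) * (2 * (ω x / μ)) by field_simp]
        rw [show 2 * ((S x)^2 + (T x)^2) * E x
            = (((S x)^2 + (T x)^2) * E x) * 2 by ring]
        apply mul_le_mul_of_nonneg_left _ hnn
        have : (1:ℝ) ≤ ω x / μ := (one_le_div hμ).mpr hω1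
        linarith
      calc (|S x| + |T x|)^2 * E x ≤ 2 * ((S x)^2 + (T x)^2) * E x := h2
      _ ≤ (2/μ) * (((S x)^2 + (T x)^2) * E x * ω x) := h3
      _ = (2/μ) * ((S x)^2 * E x * ω x + (T x)^2 * E x * ω x) := by ring
    have e3 : (∫ x in B, Q x)
        ≤ ∫ x in B, (2/μ) * ((S x)^2 * E x * ω x + (T x)^2 * E x * ω x) := by
      apply setIntegral_mono_on hintQ ((hintS.add hintT).const_mul _) hmeas e2
    calc (∫ x in B, Q x)
        ≤ ∫ x in B, (2/μ) * ((S x)^2 * E x * ω x + (T x)^2 * E x * ω x) := e3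
    _ = (2/μ) * ∫ x in B, ((S x)^2 * E x * ω x + (T x)^2 * E x * ω x) :=
        integral_const_mul _ _
    _ = (2/μ) * (NS + NT) := by rw [integral_add hintS hintT]
  have hQint_nn : 0 ≤ ∫ x in B, Q x := setIntegral_nonneg hmeas (fun x _ => hQnn x)
  have htotal : N1 + N2 ≤ (3 * M * K₁^2 / μ) * ((NS + NT) / lam) := by
    have h1a : (1/a) = 3/(2*lam) := by rw [ha_def]; field_simp
    calc N1 + N2 ≤ M * K₁^2 * ((1/a) * ∫ x in B, Q x) := hsum
    _ ≤ M * K₁^2 * ((1/a) * ((2/μ) * (NS + NT))) := by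
        apply mul_le_mul_of_nonneg_left _ (by positivity)
        apply mul_le_mul_of_nonneg_left hQle (by positivity)
    _ = (3 * M * K₁^2 / μ) * ((NS + NT) / lam) := by
        rw [h1a]; field_simp
  -- from integrals to norms
  have hLHS : IKnorm ε ω lam (pd v d) + IKnorm ε ω lam (pd 0 (pd v d))
      = Real.sqrt N1 + Real.sqrt N2 := rfl
  have hnormS : IKnorm ε ω lam S = Real.sqrt NS := rfl
  have hnormT : IKnorm ε ω lam T = Real.sqrt NT := rfl
  rw [hLHS, hnormS, hnormT]
  have step1 : Real.sqrt N1 + Real.sqrt N2 ≤ Real.sqrt (2*(N1+N2)) := by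
    have hsq : (Real.sqrt N1 + Real.sqrt N2)^2 ≤ 2*(N1+N2) := by
      nlinarith [Real.sq_sqrt hN1nn, Real.sq_sqrt hN2nn,
        sq_nonneg (Real.sqrt N1 - Real.sqrt N2)]
    calc Real.sqrt N1 + Real.sqrt N2
        = Real.sqrt ((Real.sqrt N1 + Real.sqrt N2)^2) :=
          (Real.sqrt_sq (by positivity)).symm
    _ ≤ Real.sqrt (2*(N1+N2)) := Real.sqrt_le_sqrt hsq
  have step2 : Real.sqrt (2*(N1+N2))
      ≤ Real.sqrt ((6*M*K₁^2/μ) * ((NS+NT)/lam)) := by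
    apply Real.sqrt_le_sqrt
    have hrw : (6*M*K₁^2/μ) * ((NS+NT)/lam) = 2 * ((3 * M * K₁^2 / μ) * ((NS + NT) / lam)) := by
      ring
    rw [hrw]
    linarith [htotal]
  have step3 : Real.sqrt ((6*M*K₁^2/μ) * ((NS+NT)/lam))
      = C * (Real.sqrt (NS+NT) / Real.sqrt lam) := by
    rw [Real.sqrt_mul (by positivity) ((NS+NT)/lam), hC,
      Real.sqrt_div (by positivity : (0:ℝ) ≤ NS + NT) lam]
  have step4 : Real.sqrt (NS+NT) ≤ Real.sqrt NS + Real.sqrt NT :=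
    sqrt_add_le' NS NT hNSnn hNTnn
  have hsl : 0 < Real.sqrt lam := Real.sqrt_pos.mpr hlam0
  calc Real.sqrt N1 + Real.sqrt N2 ≤ Real.sqrt (2*(N1+N2)) := step1
  _ ≤ Real.sqrt ((6*M*K₁^2/μ) * ((NS+NT)/lam)) := step2
  _ = C * (Real.sqrt (NS+NT) / Real.sqrt lam) := step3
  _ ≤ C * ((Real.sqrt NS + Real.sqrt NT) / Real.sqrt lam) := by
      apply mul_le_mul_of_nonneg_left _ hCpos.le
      apply div_le_div_of_nonneg_right ?_ hsl.le
      exact step4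
  _ = C / Real.sqrt lam * (Real.sqrt NS + Real.sqrt NT) := by ring
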